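/- Let F : X → Y be Fréchet differentiable on a convex set B, and suppose there exist a map x ↦ R_x into bounded linear operators on Y and a constant c_R ≥ 0 such that F'(x) = R_x ∘ F'(x†) and ‖R_x - I‖ ≤ c_R ‖x - x†‖ for all x ∈ B, where x† ∈ B. Then for all x ∈ B: ‖F(x) - F(x†) - F'(x†)(x - x†)‖ ≤ (c_R/2) ‖F'(x†)(x - x†)‖ · ‖x - x†‖. -/

import Mathlib

/-- If `F'(x) = R_x ∘ F'(x†)` with `‖R_x - I‖ ≤ c_R ‖x - x†‖` on a convex set `B ∋ x†`,
then `‖F(x) - F(x†) - F'(x†)(x - x†)‖ ≤ (c_R/2) ‖F'(x†)(x - x†)‖ ‖x - x†‖` for `x ∈ B`. -/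
theorem stmt5 {X Y : Type*} [NormedAddCommGroup X] [InnerProductSpace ℝ X]
    [NormedAddCommGroup Y] [InnerProductSpace ℝ Y]
    (F : X → Y) (F' : X → X →L[ℝ] Y) (B : Set X) (hB : Convex ℝ B)
    (xd : X) (hxd : xd ∈ B)
    (hderiv : ∀ x ∈ B, HasFDerivAt F (F' x) x)
    (R : X → Y →L[ℝ] Y) (cR : ℝ) (hcR : 0 ≤ cR)
    (hR : ∀ x ∈ B, F' x = (R x).comp (F' xd))
    (hRI : ∀ x ∈ B, ‖R x - ContinuousLinearMap.id ℝ Y‖ ≤ cR * ‖x - xd‖) :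
    ∀ x ∈ B, ‖F x - F xd - F' xd (x - xd)‖ ≤ cR / 2 * ‖F' xd (x - xd)‖ * ‖x - xd‖ := by
  intro x hx
  set v := F' xd (x - xd) with hv
  set c := cR * ‖x - xd‖ * ‖v‖ with hc
  have hmem : ∀ t ∈ Set.Icc (0:ℝ) 1, xd + t • (x - xd) ∈ B := by
    intro t ht
    have h := hB hxd hx (by linarith [ht.2] : (0:ℝ) ≤ 1 - t) ht.1 (by ring)
    convert h using 1
    module
  set g : ℝ → Y := fun t => F (xd + t • (x - xd)) - F xd - t • v with hg
  have hgderiv : ∀ t ∈ Set.Icc (0:ℝ) 1,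
      HasDerivAt g ((R (xd + t • (x - xd))) v - v) t := by
    intro t ht
    have hline : HasDerivAt (fun t : ℝ => xd + t • (x - xd)) (x - xd) t := by
      simpa using ((hasDerivAt_id t).smul_const (x - xd)).const_add xd
    have hF : HasDerivAt (fun t : ℝ => F (xd + t • (x - xd)))
        (F' (xd + t • (x - xd)) (x - xd)) t :=
      (hderiv _ (hmem t ht)).comp_hasDerivAt t hline
    have hFt : HasDerivAt g (F' (xd + t • (x - xd)) (x - xd) - v) t := by
      simpa [hg, Pi.sub_def] using (hF.sub_const (F xd)).sub ((hasDerivAt_id t).smul_const v)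
    rw [hR _ (hmem t ht)] at hFt
    exact hFt
  have hbound : ∀ t ∈ Set.Ico (0:ℝ) 1,
      ‖(R (xd + t • (x - xd))) v - v‖ ≤ c / 2 * (1 * t + t * 1) := by
    intro t ht
    have hmemt := hmem t ⟨ht.1, le_of_lt ht.2⟩
    have h1 : ‖(R (xd + t • (x - xd))) v - v‖
        ≤ ‖R (xd + t • (x - xd)) - ContinuousLinearMap.id ℝ Y‖ * ‖v‖ := by
      have := (R (xd + t • (x - xd)) - ContinuousLinearMap.id ℝ Y).le_opNorm v
      simpa using this
    have h2 := hRI _ hmemt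
    have h3 : ‖xd + t • (x - xd) - xd‖ = t * ‖x - xd‖ := by
      simp [norm_smul, abs_of_nonneg ht.1]
    have h4 : ‖R (xd + t • (x - xd)) - ContinuousLinearMap.id ℝ Y‖ * ‖v‖
        ≤ cR * (t * ‖x - xd‖) * ‖v‖ := by
      apply mul_le_mul_of_nonneg_right _ (norm_nonneg v)
      rw [← h3]; exact h2
    calc ‖(R (xd + t • (x - xd))) v - v‖ ≤ _ := h1
      _ ≤ cR * (t * ‖x - xd‖) * ‖v‖ := h4
      _ = c / 2 * (1 * t + t * 1) := by rw [hc]; ring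
  have hBderiv : ∀ t : ℝ, HasDerivAt (fun t : ℝ => c / 2 * (t * t)) (c / 2 * (1 * t + t * 1)) t := by
    intro t
    exact ((hasDerivAt_id t).mul (hasDerivAt_id t)).const_mul (c / 2)
  have hcont : ContinuousOn g (Set.Icc 0 1) := fun t ht => ((hgderiv t ht).continuousAt).continuousWithinAt
  have key : ∀ ⦃t : ℝ⦄, t ∈ Set.Icc (0:ℝ) 1 → ‖g t‖ ≤ c / 2 * (t * t) := by
    apply image_norm_le_of_norm_deriv_right_le_deriv_boundary hcont
      (fun t ht => ((hgderiv t ⟨ht.1, le_of_lt ht.2⟩)).hasDerivWithinAt)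
      (by simp [hg]) hBderiv hbound
  have := key (Set.right_mem_Icc.mpr zero_le_one)
  have hg1 : g 1 = F x - F xd - v := by simp [hg]
  rw [hg1] at this
  calc ‖F x - F xd - F' xd (x - xd)‖ ≤ c / 2 * (1 * 1) := this
    _ = cR / 2 * ‖F' xd (x - xd)‖ * ‖x - xd‖ := by rw [hc]; ring
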